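/- Let t, u : ℤ × ℤ → ℂ be nowhere zero, λ₂, μ₂ : ℤ → ℂ, λ₃, μ₃ : ℤ → ℂ nowhere zero, and set ρ(l,m) = λ₃(l)^((−1)^m) and σ(l,m) = μ₃(m)^((−1)^l) (using that λ₃, μ₃ take values in ℂ*, with z^(−1) meaning the inverse). Define b = λ₂ ρ t̄/u, c = (λ₂/ρ) ū/t, β = (μ₂/σ) t̂/u, γ = μ₂ σ û/t, where bar shifts l by 1 and hat shifts m by 1. Then b, c, β, γ satisfy the coupled pair of lattice equations b(l,m+1)·γ(l,m) = c(l,m)·β(l+1,m) and c(l,m+1)·β(l,m) = b(l,m)·γ(l+1,m) for all (l,m). -/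

import Mathlib

theorem stmt_9 (t u : ℤ × ℤ → ℂ) (ht : ∀ p, t p ≠ 0) (hu : ∀ p, u p ≠ 0)
    (lam₂ μ₂ lam₃ μ₃ : ℤ → ℂ) (hlam₃ : ∀ l, lam₃ l ≠ 0) (hμ₃ : ∀ m, μ₃ m ≠ 0)
    (ρ σ : ℤ → ℤ → ℂ)
    (hρ : ∀ l m : ℤ, ρ l m = lam₃ l ^ ((((-1 : ℤˣ) ^ m : ℤˣ) : ℤ)))
    (hσ : ∀ l m : ℤ, σ l m = μ₃ m ^ ((((-1 : ℤˣ) ^ l : ℤˣ) : ℤ)))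
    (b c β γ : ℤ × ℤ → ℂ)
    (hb : ∀ l m : ℤ, b (l, m) = lam₂ l * ρ l m * t (l+1, m) / u (l, m))
    (hc : ∀ l m : ℤ, c (l, m) = lam₂ l / ρ l m * u (l+1, m) / t (l, m))
    (hβ : ∀ l m : ℤ, β (l, m) = μ₂ m / σ l m * t (l, m+1) / u (l, m))
    (hγ : ∀ l m : ℤ, γ (l, m) = μ₂ m * σ l m * u (l, m+1) / t (l, m)) :
    ∀ l m : ℤ,
      b (l, m+1) * γ (l, m) = c (l, m) * β (l+1, m) ∧
      c (l, m+1) * β (l, m) = b (l, m) * γ (l+1, m) := by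
  intro l m
  have hρ0 : ∀ l m : ℤ, ρ l m ≠ 0 := fun l m => by
    rw [hρ]; exact zpow_ne_zero _ (hlam₃ l)
  have hσ0 : ∀ l m : ℤ, σ l m ≠ 0 := fun l m => by
    rw [hσ]; exact zpow_ne_zero _ (hμ₃ m)
  have hρ2 : ρ l (m+1) = (ρ l m)⁻¹ := by
    rw [hρ, hρ, ← zpow_neg]
    congr 1
    rw [zpow_add_one]
    push_cast
    ring
  have hσ2 : σ (l+1) m = (σ l m)⁻¹ := by
    rw [hσ, hσ, ← zpow_neg]
    congr 1
    rw [zpow_add_one]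
    push_cast
    ring
  constructor <;>
  · rw [hb, hc, hβ, hγ, hρ2, hσ2]
    field_simp
    ring_nf
    simp [mul_inv_cancel_right₀, hu, ht, mul_assoc, mul_left_comm, mul_comm, hρ0, hσ0]
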